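/- Let r1, r2, r3 > 0 and set l1 = r2 + r3, l2 = r1 + r3, l3 = r1 + r2. Then there exists a unique x ∈ (0, l3) such that sinh(l1) · sinh(l3 − x) = sinh(l2) · sinh(x); moreover this x satisfies x < l1 and l3 − x < l2 (so that the common value sinh(l1)/sinh(x) = sinh(l2)/sinh(l3 − x) is strictly greater than 1). -/

import Mathlib

open Real

theorem stmt_2 (r1 r2 r3 : ℝ) (hr1 : 0 < r1) (hr2 : 0 < r2) (hr3 : 0 < r3)
    (l1 l2 l3 : ℝ) (hl1 : l1 = r2 + r3) (hl2 : l2 = r1 + r3) (hl3 : l3 = r1 + r2) :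
    (∃! x : ℝ, x ∈ Set.Ioo 0 l3 ∧
      Real.sinh l1 * Real.sinh (l3 - x) = Real.sinh l2 * Real.sinh x) ∧
    (∀ x : ℝ, x ∈ Set.Ioo 0 l3 →
      Real.sinh l1 * Real.sinh (l3 - x) = Real.sinh l2 * Real.sinh x →
      x < l1 ∧ l3 - x < l2 ∧ 1 < Real.sinh l1 / Real.sinh x) := by
  have hl1p : 0 < l1 := by rw [hl1]; linarith
  have hl2p : 0 < l2 := by rw [hl2]; linarith
  have hl3p : 0 < l3 := by rw [hl3]; linarith
  have hsum : l3 < l1 + l2 := by rw [hl1, hl2, hl3]; linarith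
  have s1 : 0 < Real.sinh l1 := Real.sinh_pos_iff.2 hl1p
  have s2 : 0 < Real.sinh l2 := Real.sinh_pos_iff.2 hl2p
  have s3 : 0 < Real.sinh l3 := Real.sinh_pos_iff.2 hl3p
  set f : ℝ → ℝ := fun x => Real.sinh l1 * Real.sinh (l3 - x) - Real.sinh l2 * Real.sinh x
    with hf
  have hanti : StrictAnti f := by
    intro x y hxy
    have h1 : Real.sinh (l3 - y) < Real.sinh (l3 - x) :=
      Real.sinh_lt_sinh.2 (by linarith)
    have h2 : Real.sinh x < Real.sinh y := Real.sinh_lt_sinh.2 hxy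
    simp only [hf]
    nlinarith
  have hcont : Continuous f := by
    simp only [hf]; continuity
  have hf0 : 0 < f 0 := by
    simp only [hf, Real.sinh_zero, mul_zero, sub_zero, sub_zero]
    positivity
  have hfl3 : f l3 < 0 := by
    simp only [hf, sub_self, Real.sinh_zero, mul_zero, zero_sub, neg_neg]
    simpa using mul_pos s2 s3
  have hzero : ∀ x, (Real.sinh l1 * Real.sinh (l3 - x) = Real.sinh l2 * Real.sinh x) ↔ f x = 0 := by
    intro x; simp only [hf, sub_eq_zero]
  constructor
  · -- existence and uniqueness
    have hsub := intermediate_value_Ioo' (le_of_lt hl3p) hcont.continuousOn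
    have hmem : (0 : ℝ) ∈ Set.Ioo (f l3) (f 0) := ⟨hfl3, hf0⟩
    obtain ⟨x, hx, hfx⟩ := hsub hmem
    refine ⟨x, ⟨hx, (hzero x).2 hfx⟩, ?_⟩
    rintro y ⟨hy, hfy⟩
    exact hanti.injective (((hzero y).1 hfy).trans hfx.symm)
  · rintro x ⟨hx0, hxl3⟩ heq
    have hsx : 0 < Real.sinh x := Real.sinh_pos_iff.2 hx0
    have hx1 : x < l1 := by
      by_contra h
      push_neg at h
      have h1 : Real.sinh l1 ≤ Real.sinh x := Real.sinh_le_sinh.2 h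
      have h2 : Real.sinh l2 ≤ Real.sinh (l3 - x) := by
        rw [← mul_le_mul_iff_right₀ s1, heq]
        nlinarith
      have := Real.sinh_le_sinh.1 h2
      linarith
    refine ⟨hx1, ?_, ?_⟩
    · by_contra h
      push_neg at h
      have h1 : Real.sinh l2 ≤ Real.sinh (l3 - x) := Real.sinh_le_sinh.2 h
      have h2 : Real.sinh l1 ≤ Real.sinh x := by
        rw [← mul_le_mul_iff_right₀ s2, ← heq]
        nlinarith
      have := Real.sinh_le_sinh.1 h2
      linarith
    · exact (one_lt_div hsx).2 (Real.sinh_lt_sinh.2 hx1)
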